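/- Let α be a type, let R be a binary relation on α, and let ≈ be the equivalence relation generated by R (EqvGen R). Let s be a nonempty finite subset of α, let R' be the relation R together with all pairs (x, y) with x, y ∈ s, and let ≈' be the equivalence relation generated by R'. Then for every x ∈ s, the ≈'-equivalence class of x equals the union over y ∈ s of the ≈-equivalence classes of y: { z : z ≈' x } = ⋃_{y ∈ s} { z : z ≈ y }. -/

import Mathlib

private lemma eqvGen_key {α : Type*} (R : α → α → Prop) (s : Finset α)
    (R' : α → α → Prop) (hR' : ∀ a b, R' a b ↔ R a b ∨ (a ∈ s ∧ b ∈ s))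
    {a b : α} (h : Relation.EqvGen R' a b) :
    Relation.EqvGen R a b ∨
      ((∃ y ∈ s, Relation.EqvGen R a y) ∧ (∃ y ∈ s, Relation.EqvGen R b y)) := by
  induction h with
  | rel a b hab =>
    rcases (hR' a b).1 hab with h | ⟨ha, hb⟩
    · exact Or.inl (Relation.EqvGen.rel _ _ h)
    · exact Or.inr ⟨⟨a, ha, Relation.EqvGen.refl a⟩, ⟨b, hb, Relation.EqvGen.refl b⟩⟩
  | refl a => exact Or.inl (Relation.EqvGen.refl a)
  | symm a b _ ih =>
    rcases ih with h | ⟨h1, h2⟩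
    · exact Or.inl h.symm
    · exact Or.inr ⟨h2, h1⟩
  | trans a b c _ _ ih1 ih2 =>
    rcases ih1 with h1 | ⟨h1a, h1b⟩
    · rcases ih2 with h2 | ⟨h2b, h2c⟩
      · exact Or.inl (h1.trans _ _ _ h2)
      · exact Or.inr ⟨h2b.imp fun y hy => ⟨hy.1, h1.trans _ _ _ hy.2⟩, h2c⟩
    · rcases ih2 with h2 | ⟨h2b, h2c⟩
      · exact Or.inr ⟨h1a, h1b.imp fun y hy => ⟨hy.1, (Relation.EqvGen.symm _ _ h2).trans _ _ _ hy.2⟩⟩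
      · exact Or.inr ⟨h1a, h2c⟩

/-- Adding a new relation `s` (a nonempty finite set whose elements are all
pairwise identified) to a relation `R` merges equivalence classes: for every
`x ∈ s`, the `Relation.EqvGen R'`-class of `x` is the union over `y ∈ s` of the
`Relation.EqvGen R`-classes of `y`. -/
theorem eqvGen_class_union {α : Type*} (R : α → α → Prop)
    (s : Finset α) (hs : s.Nonempty)
    (R' : α → α → Prop) (hR' : ∀ a b, R' a b ↔ R a b ∨ (a ∈ s ∧ b ∈ s))
    (x : α) (hx : x ∈ s) :
    {z | Relation.EqvGen R' z x} = ⋃ y ∈ s, {z | Relation.EqvGen R z y} := by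
  ext z
  simp only [Set.mem_setOf_eq, Set.mem_iUnion, exists_prop]
  constructor
  · intro h
    rcases eqvGen_key R s R' hR' h with h | ⟨⟨y, hy, hzy⟩, _⟩
    · exact ⟨x, hx, h⟩
    · exact ⟨y, hy, hzy⟩
  · rintro ⟨y, hy, hzy⟩
    have hmono : ∀ a b, Relation.EqvGen R a b → Relation.EqvGen R' a b := fun a b h =>
      Relation.EqvGen.mono (fun a b hab => (hR' a b).2 (Or.inl hab)) _ _ h
    exact (hmono _ _ hzy).trans _ _ _ (Relation.EqvGen.rel _ _ ((hR' y x).2 (Or.inr ⟨hy, hx⟩)))
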